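/- Let A ⊆ ℝ be nonempty compact with fractal string L_A = (ℓ_j). Then the tube function V_A(ε) = vol(A_ε \ A) is piecewise linear; for every ε ∈ (0,∞) not of the form ℓ_j/2, V_A is differentiable at ε with V_A'(ε) = 2 + 2N(1/(2ε)), where N is the geometric counting function of L_A. Moreover, the right derivative at every ε > 0 equals 2β₀(A;ε) = 2 + 2·#{j : ℓ_j > 2ε} and the left derivative equals 2 + 2N(1/(2ε)). -/

import Mathlib

open Metric MeasureTheory Filter Set Topology
open scoped ENNReal

noncomputable section

/-- Finiteness of level sets of a summable sequence. -/
lemma tube_aux_finite {ℓ : ℕ → ℝ} (hsum : Summable ℓ) {c : ℝ} (hc : 0 < c) :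
    {j | c ≤ ℓ j}.Finite := by
  have h0 : Tendsto ℓ atTop (nhds 0) := hsum.tendsto_atTop_zero
  have hev : ∀ᶠ j in atTop, ℓ j < c := h0.eventually_lt_const hc
  rcases eventually_atTop.1 hev with ⟨N, hN⟩
  refine (Set.finite_Iio N).subset fun j hj => ?_
  by_contra h
  exact absurd (hN j (not_lt.1 h)) (not_lt.2 hj)

/-- affine derivative -/
lemma tube_aux_affine (c m x : ℝ) : HasDerivAt (fun y : ℝ => c + m * y) m x := by
  simpa using ((hasDerivAt_id x).const_mul m).const_add c

lemma tube_aux_toFinset_eq {s t : Set ℕ} (hs : s.Finite) (ht : t.Finite) (h : s = t) :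
    hs.toFinset = ht.toFinset := by subst h; rfl

/-- rewrite the tail sum as total minus head sum -/
lemma tube_aux_tail {ℓ : ℕ → ℝ} (hsum : Summable ℓ) {x : ℝ} (hx : 0 < x) :
    ∑' j : {j : ℕ // ℓ j < 2 * x}, ℓ (j : ℕ) =
      (∑' j, ℓ j) - ∑ j ∈ (tube_aux_finite hsum (by linarith : (0:ℝ) < 2 * x)).toFinset, ℓ j := by
  have hfin := tube_aux_finite hsum (by linarith : (0:ℝ) < 2 * x)
  have hcompl : {j : ℕ | ℓ j < 2 * x} = {j | 2 * x ≤ ℓ j}ᶜ := by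
    ext j; simp [not_le]
  have h1 := hsum.tsum_subtype_add_tsum_subtype_compl {j | 2 * x ≤ ℓ j}
  have h2 : (∑' j : ({j : ℕ | 2 * x ≤ ℓ j} : Set ℕ), ℓ (j : ℕ)) = ∑ j ∈ hfin.toFinset, ℓ j := by
    rw [← Finset.tsum_subtype hfin.toFinset fun j => ℓ j]
    exact tsum_congr_set_coe _ hfin.coe_toFinset.symm
  have h3 : (∑' j : {j : ℕ // ℓ j < 2 * x}, ℓ (j : ℕ)) =
      ∑' j : ({j : ℕ | 2 * x ≤ ℓ j}ᶜ : Set ℕ), ℓ (j : ℕ) :=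
    tsum_congr_set_coe _ hcompl
  rw [h3]
  rw [h2] at h1
  have : (tube_aux_finite hsum (by linarith : (0:ℝ) < 2 * x)).toFinset = hfin.toFinset :=
    tube_aux_toFinset_eq _ _ rfl
  rw [this]
  linarith

/-- local constancy of the level set, from the left -/
lemma tube_aux_left {ℓ : ℕ → ℝ} (hsum : Summable ℓ) {ε : ℝ} (hε : 0 < ε) :
    ∃ δ > (0:ℝ), δ < ε ∧ ∀ x : ℝ, ε - δ < x → x ≤ ε →
      {j | 2 * x ≤ ℓ j} = {j | 2 * ε ≤ ℓ j} := by
  have hF := tube_aux_finite hsum hε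
  classical
  set G := hF.toFinset.filter (fun j => ℓ j < 2 * ε) with hGdef
  by_cases hGne : G.Nonempty
  · obtain ⟨j₀, hj₀G, hmax⟩ := G.exists_max_image ℓ hGne
    have hj₀lt : ℓ j₀ < 2 * ε := (Finset.mem_filter.1 hj₀G).2
    refine ⟨min (ε/2) ((2*ε - ℓ j₀)/2), lt_min (by linarith) (by linarith), ?_, ?_⟩
    · exact lt_of_le_of_lt (min_le_left _ _) (by linarith)
    intro x hx1 hx2
    have hd1 : min (ε/2) ((2*ε - ℓ j₀)/2) ≤ ε/2 := min_le_left _ _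
    have hd2 : min (ε/2) ((2*ε - ℓ j₀)/2) ≤ (2*ε - ℓ j₀)/2 := min_le_right _ _
    ext j
    simp only [Set.mem_setOf_eq]
    constructor
    · intro h
      have hjF : j ∈ hF.toFinset := hF.mem_toFinset.2 (by
        show ε ≤ ℓ j
        linarith)
      by_contra hcon
      push_neg at hcon
      have hjG : j ∈ G := Finset.mem_filter.2 ⟨hjF, hcon⟩
      have := hmax j hjG
      linarith
    · intro h; linarith
  · refine ⟨ε/2, by linarith, by linarith, ?_⟩
    intro x hx1 hx2
    ext j
    simp only [Set.mem_setOf_eq]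
    constructor
    · intro h
      have hjF : j ∈ hF.toFinset := hF.mem_toFinset.2 (by
        show ε ≤ ℓ j
        linarith)
      by_contra hcon
      push_neg at hcon
      exact hGne ⟨j, Finset.mem_filter.2 ⟨hjF, hcon⟩⟩
    · intro h; linarith

/-- local constancy of the strict level set, from the right -/
lemma tube_aux_right {ℓ : ℕ → ℝ} (hsum : Summable ℓ) {ε : ℝ} (hε : 0 < ε) :
    ∃ δ > (0:ℝ), ∀ x : ℝ, ε < x → x < ε + δ →
      {j | 2 * x ≤ ℓ j} = {j | 2 * ε < ℓ j} := by
  have hFg : {j | 2 * ε < ℓ j}.Finite :=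
    (tube_aux_finite hsum (by linarith : (0:ℝ) < 2 * ε)).subset fun j hj => show 2 * ε ≤ ℓ j from le_of_lt hj
  by_cases hne : hFg.toFinset.Nonempty
  · obtain ⟨j₀, hj₀, hmin⟩ := hFg.toFinset.exists_min_image ℓ hne
    have h0 : 2 * ε < ℓ j₀ := by
      have := hFg.mem_toFinset.1 hj₀
      exact this
    refine ⟨(ℓ j₀ - 2*ε)/2, by linarith, ?_⟩
    intro x hx1 hx2
    ext j
    simp only [Set.mem_setOf_eq]
    constructor
    · intro h; linarith
    · intro h
      have hjG : j ∈ hFg.toFinset := hFg.mem_toFinset.2 h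
      have := hmin j hjG
      linarith
  · refine ⟨1, one_pos, ?_⟩
    intro x hx1 hx2
    ext j
    simp only [Set.mem_setOf_eq]
    constructor
    · intro h
      exact absurd ⟨j, hFg.mem_toFinset.2 (by show 2*ε < ℓ j; linarith)⟩ hne
    · intro h
      exact absurd ⟨j, hFg.mem_toFinset.2 h⟩ hne

/-- differentiability of the tube function in `ℝ`: let `A ⊆ ℝ` be
nonempty compact with fractal string `ℓ` (nonincreasing, positive, summable) and tube
function `V(ε) = vol(A_ε \ A)` satisfying the elementary tube formula
`V(ε) = 2ε + 2ε·N(1/(2ε)) + Σ_{ℓ_j < 2ε} ℓ_j` where `N(1/(2ε)) = #{j : ℓ_j ≥ 2ε}`.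
Then `V` is piecewise linear: around every `ε > 0` not of the form `ℓ_j/2` it is
affine and differentiable there with `V'(ε) = 2 + 2N(1/(2ε))`; moreover at every
`ε > 0` the right derivative equals `2β₀(A;ε) = 2 + 2·#{j : ℓ_j > 2ε}` and the left
derivative equals `2 + 2N(1/(2ε))`. -/
theorem tube_function_derivatives_dim_one (A : Set ℝ) (hA : IsCompact A)
    (hne : A.Nonempty) (ℓ : ℕ → ℝ)
    (hpos : ∀ j, 0 < ℓ j) (hanti : Antitone ℓ) (hsum : Summable ℓ)
    (htube : ∀ ε > (0:ℝ),
      (volume (Metric.cthickening ε A \ A)).toReal =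
        2 * ε + 2 * ε * (Set.ncard {j | 2 * ε ≤ ℓ j} : ℝ) +
          ∑' j : {j : ℕ // ℓ j < 2 * ε}, ℓ (j : ℕ)) :
    (∀ ε > (0:ℝ), (∀ j, ε ≠ ℓ j / 2) →
      (∃ δ > (0:ℝ), ∃ c m : ℝ, ∀ x ∈ Set.Ioo (ε - δ) (ε + δ),
        (volume (Metric.cthickening x A \ A)).toReal = c + m * x) ∧
      HasDerivAt (fun x : ℝ => (volume (Metric.cthickening x A \ A)).toReal)
        (2 + 2 * (Set.ncard {j | 2 * ε ≤ ℓ j} : ℝ)) ε) ∧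
    (∀ ε > (0:ℝ),
      HasDerivWithinAt (fun x : ℝ => (volume (Metric.cthickening x A \ A)).toReal)
        (2 + 2 * (Set.ncard {j | 2 * ε < ℓ j} : ℝ)) (Set.Ici ε) ε ∧
      HasDerivWithinAt (fun x : ℝ => (volume (Metric.cthickening x A \ A)).toReal)
        (2 + 2 * (Set.ncard {j | 2 * ε ≤ ℓ j} : ℝ)) (Set.Iic ε) ε) := by
  set F : ℝ → ℝ := fun x : ℝ => (volume (Metric.cthickening x A \ A)).toReal with hFdef
  -- the basic affine formula for F
  have hVx : ∀ x : ℝ, 0 < x → ∀ (hfx : {j | 2 * x ≤ ℓ j}.Finite),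
      F x = ((∑' j, ℓ j) - ∑ j ∈ hfx.toFinset, ℓ j)
        + (2 + 2 * (hfx.toFinset.card : ℝ)) * x := by
    intro x hx hfx
    have ht := htube x hx
    have hts := tube_aux_tail hsum hx
    have hcard : ((Set.ncard {j | 2 * x ≤ ℓ j}) : ℝ) = (hfx.toFinset.card : ℝ) := by
      rw [Set.ncard_eq_toFinset_card _ hfx]
    have hEq : (tube_aux_finite hsum (by linarith : (0:ℝ) < 2 * x)).toFinset
        = hfx.toFinset := tube_aux_toFinset_eq _ _ rfl
    show (volume (Metric.cthickening x A \ A)).toReal = _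
    rw [ht, hts, hcard, hEq]
    ring
  -- the key local structure statement, for any ε > 0
  have key : ∀ ε : ℝ, 0 < ε → ∃ δ > (0:ℝ), ∃ cL cR : ℝ,
      (∀ x : ℝ, ε - δ < x → x ≤ ε →
        F x = cL + (2 + 2 * (Set.ncard {j | 2 * ε ≤ ℓ j} : ℝ)) * x) ∧
      (∀ x : ℝ, ε ≤ x → x < ε + δ →
        F x = cR + (2 + 2 * (Set.ncard {j | 2 * ε < ℓ j} : ℝ)) * x) := by
    intro ε hε
    have hfS : {j | 2 * ε ≤ ℓ j}.Finite := tube_aux_finite hsum (by linarith)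
    have hfG : {j | 2 * ε < ℓ j}.Finite := hfS.subset fun j hj => show 2 * ε ≤ ℓ j from le_of_lt hj
    obtain ⟨δL, hδL, hδLε, hLset⟩ := tube_aux_left hsum hε
    obtain ⟨δR, hδR, hRset⟩ := tube_aux_right hsum hε
    have hnS : ((Set.ncard {j | 2 * ε ≤ ℓ j}) : ℝ) = (hfS.toFinset.card : ℝ) := by
      rw [Set.ncard_eq_toFinset_card _ hfS]
    have hnG : ((Set.ncard {j | 2 * ε < ℓ j}) : ℝ) = (hfG.toFinset.card : ℝ) := by
      rw [Set.ncard_eq_toFinset_card _ hfG]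
    set S : ℝ := ∑' j, ℓ j with hSdef
    set cL : ℝ := S - ∑ j ∈ hfS.toFinset, ℓ j with hcL
    set cR : ℝ := S - ∑ j ∈ hfG.toFinset, ℓ j with hcR
    refine ⟨min δL δR, lt_min hδL hδR, cL, cR, ?_, ?_⟩
    · intro x h1 h2
      have hx : 0 < x := by
        have : ε - δL < x := by
          have := min_le_left δL δR; linarith
        linarith
      have hset := hLset x (by have := min_le_left δL δR; linarith) h2
      have hfx : {j | 2 * x ≤ ℓ j}.Finite := tube_aux_finite hsum (by linarith)
      rw [hVx x hx hfx, tube_aux_toFinset_eq hfx hfS hset, hnS]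
    · intro x h1 h2
      rcases eq_or_lt_of_le h1 with heq | hlt
      · -- value at x = ε : convert the ≤-formula to the <-formula
        subst heq
        rw [hVx ε (by linarith) hfS]
        have hsub : hfG.toFinset ⊆ hfS.toFinset := by
          intro j hj
          rw [Set.Finite.mem_toFinset] at hj ⊢
          exact show 2 * ε ≤ ℓ j from le_of_lt hj
        have hdiff : ∀ j ∈ hfS.toFinset \ hfG.toFinset, ℓ j = 2 * ε := by
          intro j hj
          rw [Finset.mem_sdiff, Set.Finite.mem_toFinset, Set.Finite.mem_toFinset] at hj
          have h1' : 2 * ε ≤ ℓ j := hj.1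
          have h2' : ¬ 2 * ε < ℓ j := hj.2
          exact le_antisymm (not_lt.1 h2') h1'
        have hk : (∑ j ∈ hfS.toFinset, ℓ j) - (∑ j ∈ hfG.toFinset, ℓ j)
            = ((hfS.toFinset.card : ℝ) - (hfG.toFinset.card : ℝ)) * (2 * ε) := by
          have hsd := Finset.sum_sdiff (f := ℓ) hsub
          have hsc : ∑ j ∈ hfS.toFinset \ hfG.toFinset, ℓ j
              = ((hfS.toFinset \ hfG.toFinset).card : ℝ) * (2 * ε) := by
            rw [Finset.sum_congr rfl hdiff, Finset.sum_const, nsmul_eq_mul]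
          rw [Finset.card_sdiff_of_subset hsub, Nat.cast_sub (Finset.card_le_card hsub)] at hsc
          linarith
        rw [hnG, hcR]
        linear_combination -hk
      · have hset := hRset x hlt (by have := min_le_right δL δR; linarith)
        have hfx : {j | 2 * x ≤ ℓ j}.Finite := tube_aux_finite hsum (by linarith)
        rw [hVx x (by linarith) hfx, tube_aux_toFinset_eq hfx hfG hset, hnG]
  constructor
  · -- two-sided differentiability away from ℓ j / 2
    intro ε hε hno
    obtain ⟨δ, hδ, cL, cR, hL, hR⟩ := key ε hε
    have hseteq : {j | 2 * ε < ℓ j} = {j | 2 * ε ≤ ℓ j} := by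
      ext j
      simp only [Set.mem_setOf_eq]
      constructor
      · exact le_of_lt
      · intro h
        rcases lt_or_eq_of_le h with h' | h'
        · exact h'
        · exact absurd (by linarith : ε = ℓ j / 2) (hno j)
    set m : ℝ := 2 + 2 * (Set.ncard {j | 2 * ε ≤ ℓ j} : ℝ) with hm
    have hmR : (2 : ℝ) + 2 * (Set.ncard {j | 2 * ε < ℓ j} : ℝ) = m := by
      rw [hseteq]
    have hcLR : cL = cR := by
      have h1 := hL ε (by linarith) le_rfl
      have h2 := hR ε le_rfl (by linarith)
      rw [hmR] at h2
      have hm0 : F ε = cL + m * ε := h1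
      have hm1 : F ε = cR + m * ε := h2
      linarith
    have hall : ∀ x ∈ Set.Ioo (ε - δ) (ε + δ), F x = cL + m * x := by
      intro x hx
      rcases le_or_gt x ε with h | h
      · exact hL x hx.1 h
      · rw [hcLR]
        have := hR x (le_of_lt h) hx.2
        rw [hmR] at this
        exact this
    refine ⟨⟨δ, hδ, cL, m, hall⟩, ?_⟩
    have haff : HasDerivAt (fun y : ℝ => cL + m * y) m ε := tube_aux_affine cL m ε
    have hev : F =ᶠ[nhds ε] fun y : ℝ => cL + m * y := by
      filter_upwards [Ioo_mem_nhds (by linarith : ε - δ < ε) (by linarith : ε < ε + δ)]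
        with x hx using hall x hx
    exact haff.congr_of_eventuallyEq hev
  · -- one-sided derivatives at any ε > 0
    intro ε hε
    obtain ⟨δ, hδ, cL, cR, hL, hR⟩ := key ε hε
    constructor
    · -- right derivative within Ici ε
      set m : ℝ := 2 + 2 * (Set.ncard {j | 2 * ε < ℓ j} : ℝ) with hm
      have haff : HasDerivWithinAt (fun y : ℝ => cR + m * y) m (Set.Ici ε) ε :=
        (tube_aux_affine cR m ε).hasDerivWithinAt
      refine haff.congr_of_eventuallyEq ?_ (hR ε le_rfl (by linarith))
      have hmem : Set.Ico ε (ε + δ) ∈ nhdsWithin ε (Set.Ici ε) :=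
        Ico_mem_nhdsGE (by linarith)
      filter_upwards [hmem] with x hx using hR x hx.1 hx.2
    · -- left derivative within Iic ε
      set m : ℝ := 2 + 2 * (Set.ncard {j | 2 * ε ≤ ℓ j} : ℝ) with hm
      have haff : HasDerivWithinAt (fun y : ℝ => cL + m * y) m (Set.Iic ε) ε :=
        (tube_aux_affine cL m ε).hasDerivWithinAt
      refine haff.congr_of_eventuallyEq ?_ (hL ε (by linarith) le_rfl)
      have hmem : Set.Ioc (ε - δ) ε ∈ nhdsWithin ε (Set.Iic ε) :=
        Ioc_mem_nhdsLE (by linarith)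
      filter_upwards [hmem] with x hx using hL x hx.1 hx.2
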